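/- arXiv:2403.13939 — 8 statements merged into one kernel-verified Lean document; each statement's English description precedes it below -/
import Mathlib

section
/- If the set of torsion elements T_R(M) forms a submodule of M, then M is torsion free if and only if M is regular fusible. -/
open MulOpposite

/-- `m` is a torsion element of the right `R`-module `M`. -/
def IsTorsionElt (R M : Type*) [Ring R] [AddCommGroup M] [Module Rᵐᵒᵖ M] (m : M) : Prop :=
  ∃ r : R, r ≠ 0 ∧ op r • m = 0

/-- `m` is a torsion-free element of the right `R`-module `M` (`ann_R(m) = 0`). -/
def IsTorsionFreeElt (R M : Type*) [Ring R] [AddCommGroup M] [Module Rᵐᵒᵖ M] (m : M) : Prop :=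
  ∀ r : R, op r • m = 0 → r = 0

/-- `r ∈ Zd(M)`: `r` is a zero divisor of the right `R`-module `M`. -/
def IsZdElt (R M : Type*) [Ring R] [AddCommGroup M] [Module Rᵐᵒᵖ M] (r : R) : Prop :=
  ∃ m : M, m ≠ 0 ∧ op r • m = 0

/-- `m` is fusible: it is the sum of a torsion and a torsion-free element. -/
def FusibleElt (R M : Type*) [Ring R] [AddCommGroup M] [Module Rᵐᵒᵖ M] (m : M) : Prop :=
  ∃ x y : M, IsTorsionElt R M x ∧ IsTorsionFreeElt R M y ∧ m = x + y

/-- `M` is a fusible right `R`-module. -/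
def FusibleModule (R M : Type*) [Ring R] [AddCommGroup M] [Module Rᵐᵒᵖ M] : Prop :=
  ∀ m : M, m ≠ 0 → FusibleElt R M m

/-- `M` is a regular fusible right `R`-module. -/
def RegularFusibleModule (R M : Type*) [Ring R] [AddCommGroup M] [Module Rᵐᵒᵖ M] : Prop :=
  ∀ m : M, m ≠ 0 → ∃ r : R, ¬ IsZdElt R M r ∧ FusibleElt R M (op r • m)

/-- If the torsion elements form a submodule, then `M` is torsion free iff
`M` is regular fusible. -/
theorem torsionFree_iff_regularFusible_of_torsion_submodule (R M : Type*) [Ring R]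
    [AddCommGroup M] [Module Rᵐᵒᵖ M]
    (hadd : ∀ x y : M, IsTorsionElt R M x → IsTorsionElt R M y → IsTorsionElt R M (x + y))
    (hsmul : ∀ (r : R) (x : M), IsTorsionElt R M x → IsTorsionElt R M (op r • x)) :
    (∀ m : M, IsTorsionElt R M m → m = 0) ↔ RegularFusibleModule R M := by
  constructor
  · intro htf m hm
    have h1 : (1 : R) ≠ 0 := by
      intro h
      apply hm
      have : m = op (1 : R) • m := (one_smul _ m).symm
      rw [this, h, op_zero, zero_smul]
    refine ⟨1, ?_, 0, m, ⟨1, h1, by simp⟩, ?_, by simp⟩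
    · rintro ⟨n, hn, hn0⟩
      exact hn (by simpa using hn0)
    · intro r hr
      by_contra hr0
      exact hm (htf m ⟨r, hr0, by simpa using hr⟩)
  · intro hrf m hm
    by_contra hm0
    obtain ⟨r, -, x, y, hx, hy, hxy⟩ := hrf m hm0
    have hrm : IsTorsionElt R M (op r • m) := hsmul r m hm
    have hnx : IsTorsionElt R M (-x) := by
      obtain ⟨t, ht, ht0⟩ := hx
      exact ⟨t, ht, by rw [smul_neg, ht0, neg_zero]⟩
    have hyt : IsTorsionElt R M y := by
      have := hadd (op r • m) (-x) hrm hnx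
      rw [hxy] at this
      simpa using this
    obtain ⟨t, ht, ht0⟩ := hyt
    exact ht (hy t ht0)
end

section
/- Suppose R satisfies the comparability relation between right annihilators of elements of M (for all m1, m2 ∈ M, ann_R(m1) ⊆ ann_R(m2) or ann_R(m2) ⊆ ann_R(m1)), and R − Zd(M) is contained in the center of R. Then M is regular fusible if and only if M is torsion free. -/
open MulOpposite

/-- If annihilators of elements of `M` are comparable and `R − Zd(M)` is contained in the
center of `R`, then `M` is regular fusible iff `M` is torsion free. -/
theorem regularFusible_iff_torsionFree_of_comparable (R M : Type*) [Ring R]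
    [AddCommGroup M] [Module Rᵐᵒᵖ M]
    (hcomp : ∀ m₁ m₂ : M, (∀ r : R, op r • m₁ = 0 → op r • m₂ = 0) ∨
      (∀ r : R, op r • m₂ = 0 → op r • m₁ = 0))
    (hcen : ∀ r : R, ¬ IsZdElt R M r → ∀ s : R, r * s = s * r) :
    RegularFusibleModule R M ↔ (∀ m : M, IsTorsionElt R M m → m = 0) := by
  constructor
  · intro hrf m hm
    by_contra hm0
    obtain ⟨r₀, hr₀, hr₀m⟩ := hm
    obtain ⟨r, hrZd, x, y, ⟨s, hs, hsx⟩, hy, hdec⟩ := hrf m hm0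
    -- key: any t annihilating m annihilates x + y
    have key : ∀ t : R, op t • m = 0 → op t • x + op t • y = 0 := by
      intro t ht
      have : op t • (op r • m) = 0 := by
        have h1 : op t • (op r • m) = op (r * t) • m := by
          rw [← mul_smul]; rfl
        rw [h1, hcen r hrZd t, show op (t * r) = op r * op t from rfl, mul_smul, ht, smul_zero]
      rw [hdec, smul_add] at this
      exact this
    rcases hcomp m x with h | h
    · -- ann m ⊆ ann x
      have hx0 : op r₀ • x = 0 := h r₀ hr₀m
      have := key r₀ hr₀m
      rw [hx0, zero_add] at this
      exact hr₀ (hy r₀ this)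
    · -- ann x ⊆ ann m
      have hsm : op s • m = 0 := h s hsx
      have := key s hsm
      rw [hsx, zero_add] at this
      exact hs (hy s this)
  · intro htf m hm
    have h1 : (1 : R) ≠ 0 := by
      intro h
      apply hm
      have : (1 : Rᵐᵒᵖ) = 0 := by rw [← op_one, h, op_zero]
      calc m = (1 : Rᵐᵒᵖ) • m := (one_smul _ m).symm
        _ = 0 := by rw [this, zero_smul]
    refine ⟨1, ?_, 0, m, ⟨1, h1, smul_zero _⟩, ?_, ?_⟩
    · rintro ⟨n, hn, hn0⟩
      exact hn (by rwa [op_one, one_smul] at hn0)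
    · intro t ht
      by_contra ht0
      exact hm (htf m ⟨t, ht0, ht⟩)
    · rw [op_one, one_smul, zero_add]
end

section
/- If R − Zd(M) is contained in the center of R and M is a regular fusible module, then M is nonsingular (Z(M) = 0). -/
open MulOpposite

/-- `m` is a singular element: its annihilator meets every nonzero right ideal of `R`
nontrivially (i.e. `ann_R(m)` is an essential right ideal). -/
def IsSingularElt (R M : Type*) [Ring R] [AddCommGroup M] [Module Rᵐᵒᵖ M] (m : M) : Prop :=
  ∀ J : Submodule Rᵐᵒᵖ R, J ≠ ⊥ → ∃ x : R, x ≠ 0 ∧ x ∈ J ∧ op x • m = 0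

/-- If `R − Zd(M)` is contained in the center of `R` and `M` is regular fusible,
then `M` is nonsingular. -/
theorem regularFusible_nonsingular (R M : Type*) [Ring R] [AddCommGroup M]
    [Module Rᵐᵒᵖ M]
    (hcen : ∀ r : R, ¬ IsZdElt R M r → ∀ s : R, r * s = s * r)
    (h : RegularFusibleModule R M) :
    ∀ m : M, IsSingularElt R M m → m = 0 := by
  intro m hm
  by_contra hm0
  obtain ⟨r, hr, x, y, ⟨t, ht, htx⟩, hy, hsum⟩ := h m hm0
  have hc := hcen r hr
  have hJ : (Submodule.span Rᵐᵒᵖ {t} : Submodule Rᵐᵒᵖ R) ≠ ⊥ := by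
    intro hbot
    exact ht (by simpa [hbot] using Submodule.mem_span_singleton_self (R := Rᵐᵒᵖ) t)
  obtain ⟨s, hs, hsJ, hsm⟩ := hm _ hJ
  obtain ⟨a, ha⟩ := Submodule.mem_span_singleton.mp hsJ
  have hsx : op s • x = 0 := by
    have h1 : a • t = t * a.unop := rfl
    calc op s • x = op (t * a.unop) • x := by rw [← ha, h1]
      _ = (op a.unop * op t) • x := by rw [op_mul]
      _ = (a * op t) • x := by rw [op_unop]
      _ = a • (op t • x) := mul_smul _ _ _
      _ = 0 := by rw [htx, smul_zero]
  have hsrm : op s • (op r • m) = 0 := by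
    calc op s • (op r • m) = (op s * op r) • m := (mul_smul _ _ _).symm
      _ = op (r * s) • m := by rw [← op_mul]
      _ = op (s * r) • m := by rw [hc s]
      _ = (op r * op s) • m := by rw [op_mul]
      _ = op r • (op s • m) := mul_smul _ _ _
      _ = 0 := by rw [hsm, smul_zero]
  have hsy : op s • y = 0 := by
    have := hsrm
    rw [hsum, smul_add, hsx, zero_add] at this
    exact this
  exact hs (hy s hsy)
end

section
/- Every regular fusible module over a right duo ring (a ring in which Ra ⊆ aR for all a) is nonsingular. -/
open MulOpposite

/-- Every regular fusible module over a right duo ring is nonsingular. -/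
theorem regularFusible_nonsingular_of_rightDuo (R M : Type*) [Ring R] [AddCommGroup M]
    [Module Rᵐᵒᵖ M]
    (hduo : ∀ a r : R, ∃ r' : R, r * a = a * r')
    (h : RegularFusibleModule R M) :
    ∀ m : M, IsSingularElt R M m → m = 0 := by
  intro m hsing
  by_contra hm
  obtain ⟨r, -, x, y, ⟨a, ha0, hax⟩, hy, heq⟩ := h m hm
  -- J = span of a (the right ideal aR)
  obtain ⟨b, hb0, hbJ, hbm⟩ := hsing (Submodule.span Rᵐᵒᵖ {a}) (by
    intro hbot
    exact ha0 (by simpa [hbot] using Submodule.mem_span_singleton_self a (R := Rᵐᵒᵖ)))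
  obtain ⟨s, hs⟩ := Submodule.mem_span_singleton.mp hbJ
  have hbas : b = a * s.unop := by
    simpa [MulOpposite.smul_eq_mul_unop] using hs.symm
  -- op b • x = 0
  have hbx : op b • x = 0 := by
    rw [hbas, op_mul, mul_smul, hax, smul_zero]
  -- op b • (op r • m) = 0, using duo: r * b = b * r'
  obtain ⟨r', hr'⟩ := hduo b r
  have hbrm : op b • (op r • m) = 0 := by
    rw [smul_smul, ← op_mul, hr', op_mul, mul_smul, hbm, smul_zero]
  have hby : op b • y = 0 := by
    have := hbrm
    rw [heq, smul_add, hbx, zero_add] at this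
    exact this
  exact hb0 (hy b hby)
end

section
/- Every regular fusible module over a right duo ring is reduced. -/
open MulOpposite

/-- Every regular fusible module over a right duo ring is reduced:
if `ma = 0` then `mR ∩ Ma = 0`. -/
theorem regularFusible_reduced_of_rightDuo (R M : Type*) [Ring R] [AddCommGroup M]
    [Module Rᵐᵒᵖ M]
    (hduo : ∀ a r : R, ∃ r' : R, r * a = a * r')
    (h : RegularFusibleModule R M) :
    ∀ (m : M) (a : R), op a • m = 0 →
      ∀ x : M, (∃ r : R, x = op r • m) → (∃ m' : M, x = op a • m') → x = 0 := by
  rintro m a hma x ⟨r, hr⟩ ⟨m', hm'⟩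
  by_contra hx
  obtain ⟨u, -, z, t, ⟨c, hc, hzc⟩, ht, hsum⟩ := h x hx
  have key : ∀ (s : R) (n : M), op a • n = 0 → op (a * s) • n = 0 := by
    intro s n hn
    rw [op_mul, mul_smul, hn, smul_zero]
  -- (x u) a = 0
  have h1 : op (r * u * a) • m = 0 := by
    obtain ⟨u₁, hu₁⟩ := hduo a u
    obtain ⟨r₁, hr₁⟩ := hduo a r
    have e : r * u * a = a * (r₁ * u₁) := by
      rw [mul_assoc, hu₁, ← mul_assoc, hr₁, mul_assoc]
    rw [e]
    exact key _ _ hma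
  have huax : op a • (op u • x) = 0 := by
    rw [hr, smul_smul, smul_smul, ← op_mul, ← op_mul, ← mul_assoc]
    exact h1
  -- t a = -(z a)
  have hta : op a • t = -(op a • z) := by
    have h2 : op a • z + op a • t = 0 := by
      rw [← smul_add, ← hsum]; exact huax
    exact eq_neg_of_add_eq_zero_right h2
  -- a * c = 0
  have hac : a * c = 0 := by
    apply ht
    obtain ⟨a₁, ha₁⟩ := hduo c a
    have e : op (a * c) • t = op c • (op a • t) := by
      rw [smul_smul, ← op_mul]
    rw [e, hta, smul_neg, smul_smul, ← op_mul, ha₁, op_mul, mul_smul, hzc,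
      smul_zero, neg_zero]
  -- (x u) c = 0
  have h4 : op c • (op u • x) = 0 := by
    obtain ⟨u₂, hu₂⟩ := hduo c u
    rw [hm', smul_smul, smul_smul, ← op_mul, ← op_mul]
    have e : a * u * c = 0 := by
      rw [mul_assoc, hu₂, ← mul_assoc, hac, zero_mul]
    rw [← mul_assoc, e, op_zero, zero_smul]
  have htc : op c • t = 0 := by
    have h5 : op c • z + op c • t = 0 := by
      rw [← smul_add, ← hsum]; exact h4
    rw [hzc, zero_add] at h5
    exact h5
  exact hc (ht c htc)
end

section
/- Every fusible module over a right duo ring is reduced. -/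
open MulOpposite

/-- Every fusible module over a right duo ring is reduced:
if `ma = 0` then `mR ∩ Ma = 0`. -/
theorem fusible_reduced_of_rightDuo (R M : Type*) [Ring R] [AddCommGroup M]
    [Module Rᵐᵒᵖ M]
    (hduo : ∀ a r : R, ∃ r' : R, r * a = a * r')
    (h : FusibleModule R M) :
    ∀ (m : M) (a : R), op a • m = 0 →
      ∀ x : M, (∃ r : R, x = op r • m) → (∃ m' : M, x = op a • m') → x = 0 := by
  intro m a hma x hx1 hx2
  obtain ⟨r, hr⟩ := hx1
  obtain ⟨n, hn⟩ := hx2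
  -- Step 1: x • a = 0
  obtain ⟨r', hr'⟩ := hduo a r
  have hxa : op a • x = 0 := by
    rw [hr, smul_smul, ← op_mul, hr', op_mul, mul_smul, hma, smul_zero]
  by_contra hx0
  obtain ⟨u, v, ⟨b, hb0, hub⟩, hv, hxuv⟩ := h x hx0
  -- a*b ≠ 0
  have hbx : op b • x = op b • v := by
    rw [hxuv, smul_add, hub, zero_add]
  have habn : op (a * b) • n = op b • v := by
    rw [op_mul, mul_smul, ← hn, hbx]
  have hab0 : a * b ≠ 0 := by
    intro h0
    exact hb0 (hv b (by rw [← habn, h0, op_zero, zero_smul]))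
  -- x • (a*b) = 0
  have haan : op (a * a) • n = 0 := by
    rw [op_mul, mul_smul, ← hn, hxa]
  have h4 : op (a * b) • x = 0 := by
    rw [hn, smul_smul, ← op_mul, (mul_assoc a a b).symm,
      op_mul, mul_smul, haan, smul_zero]
  -- u • (a*b) = 0
  obtain ⟨a₁, ha₁⟩ := hduo b a
  have h3 : op (a * b) • u = 0 := by
    rw [ha₁, op_mul, mul_smul, hub, smul_zero]
  have h5 : op (a * b) • v = 0 := by
    rw [hxuv, smul_add, h3, zero_add] at h4
    exact h4
  exact hab0 (hv _ h5)
end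

section
/- Let M be an A-bimodule with ann_l(M) ⊆ ann_r(M) and A ∝ M the trivial extension. For a ∈ A and m ∈ M, the element (a, m) is a left zero divisor of A ∝ M if and only if a is a left zero divisor of A or a is a left zero divisor on M (i.e., am' = 0 for some 0 ≠ m' ∈ M). -/
open MulOpposite

/-- In the trivial extension `A ∝ M` of a ring `A` by an `A`-bimodule `M` with
`ann_l(M) ⊆ ann_r(M)`, the element `(a, m)` is a left zero divisor iff `a` is a
left zero divisor of `A` or `a` is a left zero divisor on `M`. -/
theorem trivSqZeroExt_leftZeroDivisor_iff (A M : Type*) [Ring A] [AddCommGroup M]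
    [Module A M] [Module Aᵐᵒᵖ M] [SMulCommClass A Aᵐᵒᵖ M]
    (hann : ∀ a : A, (∀ m : M, a • m = 0) → (∀ m : M, op a • m = 0))
    (a : A) (m : M) :
    (∃ w : TrivSqZeroExt A M, w ≠ 0 ∧
        (TrivSqZeroExt.inl a + TrivSqZeroExt.inr m) * w = 0) ↔
      (∃ b : A, b ≠ 0 ∧ a * b = 0) ∨ (∃ m' : M, m' ≠ 0 ∧ a • m' = 0) := by
  constructor
  · rintro ⟨w, hw, hmul⟩
    have hfst : a * w.fst = 0 := by
      have := congrArg TrivSqZeroExt.fst hmul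
      simpa using this
    by_cases hb : w.fst = 0
    · right
      refine ⟨w.snd, fun h => hw (TrivSqZeroExt.ext hb h), ?_⟩
      have := congrArg TrivSqZeroExt.snd hmul
      simpa [hb] using this
    · exact Or.inl ⟨w.fst, hb, hfst⟩
  · rintro (⟨b, hb, hab⟩ | ⟨m', hm', ham'⟩)
    · by_cases hM : ∃ m' : M, m' ≠ 0 ∧ a • m' = 0
      · obtain ⟨m', hm', ham'⟩ := hM
        refine ⟨TrivSqZeroExt.inr m', ?_, ?_⟩
        · exact fun h => hm' (by simpa using congrArg TrivSqZeroExt.snd h)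
        · ext <;> simp [ham']
      · push_neg at hM
        have hinj : ∀ m' : M, a • m' = 0 → m' = 0 := by
          intro m' h
          by_contra h'
          exact hM m' h' h
        have hbann : ∀ m' : M, b • m' = 0 := fun m' =>
          hinj _ (by rw [← mul_smul, hab, zero_smul])
        have hopb : op b • m = 0 := hann b hbann m
        refine ⟨TrivSqZeroExt.inl b, ?_, ?_⟩
        · exact fun h => hb (by simpa using congrArg TrivSqZeroExt.fst h)
        · ext <;> simp [hab, hopb]
    · refine ⟨TrivSqZeroExt.inr m', ?_, ?_⟩
      · exact fun h => hm' (by simpa using congrArg TrivSqZeroExt.snd h)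
      · ext <;> simp [ham']
end

section
/- Let A be a ring and M an A-bimodule with ann_l(M) ⊆ ann_r(M). Then the trivial extension A ∝ M is a left fusible ring if and only if A is a left fusible ring and M = 0. -/
open MulOpposite

/-- A nonzero element of a ring is left fusible if it is the sum of a left zero divisor
and a non-left-zero-divisor. The ring is left fusible if every nonzero element is. -/
def LeftFusibleRing (S : Type*) [Ring S] : Prop :=
  ∀ a : S, a ≠ 0 → ∃ z r : S, (∃ y : S, y ≠ 0 ∧ z * y = 0) ∧
    (∀ y : S, r * y = 0 → y = 0) ∧ a = z + r

/-- For an `A`-bimodule `M` with `ann_l(M) ⊆ ann_r(M)`, the trivial extension `A ∝ M`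
is a left fusible ring iff `A` is a left fusible ring and `M = 0`. -/
theorem trivSqZeroExt_leftFusible_iff (A M : Type*) [Ring A] [AddCommGroup M]
    [Module A M] [Module Aᵐᵒᵖ M] [SMulCommClass A Aᵐᵒᵖ M]
    (hann : ∀ a : A, (∀ m : M, a • m = 0) → (∀ m : M, op a • m = 0)) :
    LeftFusibleRing (TrivSqZeroExt A M) ↔ (LeftFusibleRing A ∧ ∀ m : M, m = 0) := by
  constructor
  · intro h
    have hM : ∀ m : M, m = 0 := by
      intro m
      by_contra hm
      obtain ⟨z, r, ⟨y, hy0, hzy⟩, hr, heq⟩ := h (TrivSqZeroExt.inr m)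
        (fun he => hm (by simpa using congrArg TrivSqZeroExt.snd he))
      have hfst : z.fst + r.fst = 0 := by
        have := congrArg TrivSqZeroExt.fst heq; simpa using this.symm
      have hsnd : z.snd + r.snd = m := by
        have := congrArg TrivSqZeroExt.snd heq; simpa using this.symm
      -- r.fst acts injectively on M
      have hinj : ∀ t : M, r.fst • t = 0 → t = 0 := by
        intro t ht
        have h0 : r * TrivSqZeroExt.inr t = 0 := by
          ext
          · simp
          · simpa using ht
        simpa using congrArg TrivSqZeroExt.snd (hr _ h0)
      have hzy1 : z.fst * y.fst = 0 := by simpa using congrArg TrivSqZeroExt.fst hzy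
      have hzy2 : z.fst • y.snd + op y.fst • z.snd = 0 := by
        simpa using congrArg TrivSqZeroExt.snd hzy
      have hz : z.fst = -r.fst := eq_neg_of_add_eq_zero_left hfst
      have hry1 : r.fst * y.fst = 0 := by
        have := hzy1; rw [hz] at this
        simpa [neg_mul, neg_eq_zero] using this
      -- y.fst annihilates M on the left, hence on the right
      have hyann : ∀ t : M, y.fst • t = 0 := by
        intro t
        apply hinj
        rw [← mul_smul, hry1, zero_smul]
      have hopm : op y.fst • m = 0 := hann y.fst hyann m
      -- now r * y = 0, contradicting that r is not a left zero divisor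
      have hzsnd : z.snd = m - r.snd := eq_sub_of_add_eq hsnd
      have hry : r * y = 0 := by
        ext
        · simpa using hry1
        · show r.fst • y.snd + op y.fst • r.snd = 0
          rw [hz, hzsnd, neg_smul, smul_sub, hopm] at hzy2
          have key : r.fst • y.snd + op y.fst • r.snd =
              -(-(r.fst • y.snd) + (0 - op y.fst • r.snd)) := by abel
          rw [key, hzy2, neg_zero]
      exact hy0 (hr _ hry)
    have hsub : Subsingleton M := ⟨fun a b => (hM a).trans (hM b).symm⟩
    refine ⟨?_, hM⟩
    intro a ha
    obtain ⟨z, r, ⟨y, hy0, hzy⟩, hr, heq⟩ := h (TrivSqZeroExt.inl a)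
      (fun he => ha (by simpa using congrArg TrivSqZeroExt.fst he))
    refine ⟨z.fst, r.fst, ⟨y.fst, ?_, ?_⟩, ?_, ?_⟩
    · intro h0
      exact hy0 (TrivSqZeroExt.ext h0 (Subsingleton.elim _ _))
    · simpa using congrArg TrivSqZeroExt.fst hzy
    · intro t ht
      have h0 : r * TrivSqZeroExt.inl t = 0 := by
        ext
        · simpa using ht
        · exact Subsingleton.elim _ _
      simpa using congrArg TrivSqZeroExt.fst (hr _ h0)
    · simpa using congrArg TrivSqZeroExt.fst heq
  · rintro ⟨hA, hM⟩
    have hsub : Subsingleton M := ⟨fun a b => (hM a).trans (hM b).symm⟩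
    intro x hx
    have hxf : x.fst ≠ 0 := fun h0 => hx (TrivSqZeroExt.ext h0 (Subsingleton.elim _ _))
    obtain ⟨z, r, ⟨y, hy0, hzy⟩, hr, heq⟩ := hA x.fst hxf
    refine ⟨TrivSqZeroExt.inl z, TrivSqZeroExt.inl r,
      ⟨TrivSqZeroExt.inl y, fun h0 => hy0 (by simpa using congrArg TrivSqZeroExt.fst h0), ?_⟩,
      ?_, ?_⟩
    · ext
      · simpa using hzy
      · exact Subsingleton.elim _ _
    · intro w hw
      have h1 : r * w.fst = 0 := by simpa using congrArg TrivSqZeroExt.fst hw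
      exact TrivSqZeroExt.ext (hr _ h1) (Subsingleton.elim _ _)
    · ext
      · simpa using heq
      · exact Subsingleton.elim _ _
end
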